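/- Define f̃ : ℂ → ℂ by f̃(z) = f(z) for Im z ≥ 0, f̃(z) = 2z - δ(Im z)exp(-z²) for -1 ≤ Im z < 0, and f̃(z) = 2z + δ·exp(-z²) for Im z < -1. Then f̃ is continuous on ℂ, and along the negative imaginary axis |f̃(-ir)| / exp(r²) → δ as r → +∞; in particular f̃ is unbounded faster than any polynomial, so f̃ is not of polynomial type. -/

import Mathlib

open Set Complex Filter

/-- The slice function `h_y`. -/
noncomputable def hy (y x : ℝ) : ℝ :=
  if |x| + |y - 3/4| < 1/4 then 1
  else if y ≤ |x| then 4
  else if y ≤ 3/4 then 6 * |x| - 6 * y + 4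
  else (3 * |x| + 5 * y - 4) / (2 * y - 1)

/-- The map `h(x + iy) = h_y(x)·x + iy`. -/
noncomputable def hmap (z : ℂ) : ℂ := ⟨hy z.im z.re * z.re, z.im⟩

/-- For `y > 0`, the unique integer `m` with `2^{-(m+1)} < y ≤ 2^{-m}`. -/
noncomputable def mval (y : ℝ) : ℤ := ⌊Real.logb 2 y⁻¹⌋

/-- The map `f`: equal to `2^{-(m+1)} h(2^m z)` when `Im z ∈ (2^{-(m+1)}, 2^{-m}]`,
and to `2x + iy/2` when `Im z ≤ 0`. -/
noncomputable def f (z : ℂ) : ℂ :=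
  if z.im ≤ 0 then ⟨2 * z.re, z.im / 2⟩
  else (2 : ℂ) ^ (-(mval z.im + 1)) * hmap ((2 : ℂ) ^ (mval z.im) * z)

/-- The `transcendental' quasiregular map `f̃`. -/
noncomputable def ftilde (δ : ℝ) (z : ℂ) : ℂ :=
  if 0 ≤ z.im then f z
  else if -1 ≤ z.im then 2 * z - δ * (z.im : ℂ) * Complex.exp (-z ^ 2)
  else 2 * z + δ * Complex.exp (-z ^ 2)

noncomputable def hyAux (p : ℝ × ℝ) : ℝ :=
  if |p.2| + |p.1 - 3/4| < 1/4 then 1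
  else if p.1 ≤ |p.2| then 4
  else if p.1 ≤ 3/4 then 6 * |p.2| - 6 * p.1 + 4
  else (3 * |p.2| + 5 * p.1 - 4) / (max (2 * p.1 - 1) (1/2))

lemma hy_eq_aux (y x : ℝ) : hy y x = hyAux (y, x) := by
  unfold hy hyAux
  split_ifs with h1 h2 h3 <;> try rfl
  push_neg at h3
  rw [max_eq_left (by linarith)]

lemma hyAux_cont : Continuous hyAux := by
  unfold hyAux
  apply Continuous.if
  · intro a ha
    have heq := frontier_lt_subset_eq (by fun_prop : Continuous fun p : ℝ × ℝ => |p.2| + |p.1 - 3/4|)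
      (continuous_const : Continuous fun _ : ℝ × ℝ => (1/4:ℝ)) ha
    simp only [mem_setOf_eq] at heq
    obtain ⟨y, x⟩ := a
    simp only at heq ⊢
    have hxle : |x| ≤ 1/4 := by linarith [abs_nonneg (y - 3/4)]
    have hy1 : 1/2 ≤ y := by
      have h := (abs_le.mp (by linarith [abs_nonneg x] : |y - 3/4| ≤ 1/4)).1
      linarith
    rw [if_neg (by linarith : ¬ y ≤ |x|)]
    by_cases h3 : y ≤ 3/4
    · rw [if_pos h3]
      rw [_root_.abs_of_nonpos (by linarith : y - 3/4 ≤ 0)] at heq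
      linarith
    · rw [if_neg h3]
      push_neg at h3
      rw [_root_.abs_of_nonneg (by linarith : (0:ℝ) ≤ y - 3/4)] at heq
      rw [max_eq_left (by linarith), eq_comm, div_eq_iff (by linarith : (2:ℝ)*y-1 ≠ 0)]
      linarith
  · exact continuous_const
  · apply Continuous.if_le _ _ continuous_fst continuous_snd.abs
    · intro ⟨y, x⟩ h
      simp only at h ⊢
      by_cases h3 : y ≤ 3/4
      · rw [if_pos h3, h]; ring
      · rw [if_neg h3]
        push_neg at h3
        rw [max_eq_left (by linarith), eq_comm, div_eq_iff (by linarith : (2:ℝ)*y-1 ≠ 0)]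
        linarith
    · exact continuous_const
    · apply Continuous.if_le _ _ continuous_fst continuous_const
      · intro ⟨y, x⟩ h
        simp only at h ⊢
        rw [h, eq_comm, max_eq_right (by norm_num), div_eq_iff (by norm_num)]
        ring
      · fun_prop
      · apply Continuous.div (by fun_prop)
        · exact (continuous_const.mul continuous_fst |>.sub continuous_const).max continuous_const
        · intro ⟨y, x⟩
          have h2 : (1:ℝ)/2 ≤ max (2*y-1) (1/2) := le_max_right _ _
          intro h; rw [h] at h2; norm_num at h2

lemma hy_cont : Continuous fun p : ℝ × ℝ => hy p.1 p.2 := by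
  have : (fun p : ℝ × ℝ => hy p.1 p.2) = hyAux := by
    funext p; rw [hy_eq_aux]
  rw [this]; exact hyAux_cont

lemma hy_abs_le (y x : ℝ) : |hy y x| ≤ 4 := by
  unfold hy
  split_ifs with h1 h2 h3
  · norm_num
  · norm_num
  · push_neg at h1 h2
    rw [abs_le]
    constructor <;> [linarith [abs_nonneg x]; linarith]
  · push_neg at h1 h2 h3
    have hd : (0:ℝ) < 2*y - 1 := by linarith
    rw [abs_le, div_le_iff₀ hd, le_div_iff₀ hd]
    constructor <;> nlinarith [abs_nonneg x]

lemma abs_half (x : ℝ) : |x/2| = |x|/2 := by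
  rw [abs_div, _root_.abs_two]

lemma hy_double (x : ℝ) : hy 1 x = hy (1/2) (x/2) := by
  have e1 : |(1:ℝ) - 3/4| = 1/4 := by rw [_root_.abs_of_nonneg] <;> norm_num
  have e2 : |(1:ℝ)/2 - 3/4| = 1/4 := by rw [_root_.abs_of_nonpos] <;> norm_num
  have hx0 := abs_nonneg x
  unfold hy
  rw [abs_half, e1, e2]
  rw [if_neg (show ¬(|x| + 1/4 < 1/4) by push_neg; linarith),
      if_neg (show ¬(|x|/2 + 1/4 < 1/4) by push_neg; linarith)]
  by_cases h : 1 ≤ |x|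
  · rw [if_pos (show (1:ℝ) ≤ |x| from h), if_pos (show (1:ℝ)/2 ≤ |x|/2 by linarith)]
  · push_neg at h
    rw [if_neg (show ¬(1:ℝ) ≤ |x| by linarith), if_neg (show ¬(1:ℝ)/2 ≤ |x|/2 by linarith),
        if_neg (show ¬(1:ℝ) ≤ 3/4 by norm_num), if_pos (show (1:ℝ)/2 ≤ 3/4 by norm_num)]
    rw [div_eq_iff (show (2:ℝ)*1 - 1 ≠ 0 by norm_num)]
    ring

lemma two_zpow_pos (k : ℤ) : (0:ℝ) < 2 ^ k := zpow_pos (by norm_num) k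

lemma rpow_int (k : ℤ) : (2:ℝ) ^ (k:ℝ) = 2 ^ k := Real.rpow_intCast 2 k

lemma mval_eq {m : ℤ} {y : ℝ} (h1 : (2:ℝ)^(-(m+1)) < y) (h2 : y ≤ (2:ℝ)^(-m)) : mval y = m := by
  have hy0 : 0 < y := lt_trans (two_zpow_pos _) h1
  have hyi : 0 < y⁻¹ := inv_pos.mpr hy0
  have hlb : (2:ℝ)^m ≤ y⁻¹ := by
    rw [le_inv_comm₀ (two_zpow_pos m) hy0, ← zpow_neg]; exact h2
  have hub : y⁻¹ < (2:ℝ)^(m+1) := by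
    rw [inv_lt_comm₀ hy0 (two_zpow_pos (m+1)), ← zpow_neg]; exact h1
  unfold mval
  rw [Int.floor_eq_iff]
  constructor
  · rw [Real.le_logb_iff_rpow_le (by norm_num) hyi, rpow_int]; exact hlb
  · rw [Real.logb_lt_iff_lt_rpow (by norm_num) hyi,
      show ((m:ℝ)+1) = (((m+1):ℤ):ℝ) by push_cast; ring, rpow_int]
    exact hub

lemma mval_spec {y : ℝ} (hy0 : 0 < y) :
    (2:ℝ)^(-(mval y + 1)) < y ∧ y ≤ (2:ℝ)^(-(mval y)) := by
  have hyi : 0 < y⁻¹ := inv_pos.mpr hy0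
  have h1 : ((mval y : ℝ)) ≤ Real.logb 2 y⁻¹ := Int.floor_le _
  have h2 : Real.logb 2 y⁻¹ < (mval y : ℝ) + 1 := Int.lt_floor_add_one _
  rw [Real.le_logb_iff_rpow_le (by norm_num) hyi, rpow_int] at h1
  rw [Real.logb_lt_iff_lt_rpow (by norm_num) hyi,
      show ((mval y:ℝ)+1) = (((mval y+1):ℤ):ℝ) by push_cast; ring, rpow_int] at h2
  constructor
  · rw [zpow_neg, inv_lt_comm₀ (two_zpow_pos (mval y + 1)) hy0]
    exact h2
  · rw [zpow_neg, le_inv_comm₀ hy0 (two_zpow_pos (mval y))]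
    exact h1

lemma zpow_cancel' (m : ℤ) : (2:ℝ)^(-(m+1)) * (2:ℝ)^m = 1/2 := by
  rw [← zpow_add₀ (two_ne_zero : (2:ℝ) ≠ 0), show -(m+1) + m = -1 by ring, zpow_neg_one]
  norm_num

lemma zpow_cancel2 (m : ℤ) : (2:ℝ)^m * (2:ℝ)^(-m) = 1 := by
  rw [← zpow_add₀ (two_ne_zero : (2:ℝ) ≠ 0)]; simp

lemma c2 (k : ℤ) : (((2:ℝ)^k : ℝ) : ℂ) = (2:ℂ)^k := by
  rw [Complex.ofReal_zpow]; norm_num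

lemma zpow_mul_re (k : ℤ) (w : ℂ) : ((2:ℂ)^k * w).re = (2:ℝ)^k * w.re := by
  rw [show ((2:ℂ)^k) = (((2:ℝ)^k : ℝ) : ℂ) from (c2 k).symm, Complex.mul_re,
    Complex.ofReal_re, Complex.ofReal_im]
  ring

lemma zpow_mul_im (k : ℤ) (w : ℂ) : ((2:ℂ)^k * w).im = (2:ℝ)^k * w.im := by
  rw [show ((2:ℂ)^k) = (((2:ℝ)^k : ℝ) : ℂ) from (c2 k).symm, Complex.mul_im,
    Complex.ofReal_re, Complex.ofReal_im]
  ring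

lemma hmap_re (w : ℂ) : (hmap w).re = hy w.im w.re * w.re := rfl
lemma hmap_im (w : ℂ) : (hmap w).im = w.im := rfl

noncomputable def Flin (z : ℂ) : ℂ := ((2 * z.re : ℝ) : ℂ) + ((z.im / 2 : ℝ) : ℂ) * Complex.I

lemma Flin_cont : Continuous Flin := by
  unfold Flin; fun_prop

lemma Flin_re (z : ℂ) : (Flin z).re = 2 * z.re := by simp [Flin]
lemma Flin_im (z : ℂ) : (Flin z).im = z.im / 2 := by simp [Flin]

lemma f_low {z : ℂ} (h : z.im ≤ 0) : f z = Flin z := by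
  unfold f Flin
  rw [if_pos h, Complex.mk_eq_add_mul_I]

lemma f_eq_of {m : ℤ} {z : ℂ} (h1 : (2:ℝ)^(-(m+1)) < z.im) (h2 : z.im ≤ (2:ℝ)^(-m)) :
    f z = (2:ℂ)^(-(m+1)) * hmap ((2:ℂ)^m * z) := by
  have h0 : 0 < z.im := lt_trans (two_zpow_pos _) h1
  unfold f
  rw [if_neg (not_le.mpr h0), mval_eq h1 h2]

lemma f_im (z : ℂ) : (f z).im = z.im / 2 := by
  unfold f
  split_ifs with h
  · rfl
  · rw [zpow_mul_im, hmap_im, zpow_mul_im, ← mul_assoc, zpow_cancel']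
    ring

lemma f_re_bound (z : ℂ) : |(f z).re| ≤ 2 * |z.re| := by
  unfold f
  split_ifs with h
  · rw [show ((⟨2 * z.re, z.im / 2⟩ : ℂ)).re = 2 * z.re from rfl, abs_mul, _root_.abs_two]
  · rw [zpow_mul_re, hmap_re, zpow_mul_re]
    set m := mval z.im
    have ha := two_zpow_pos m
    have hb := two_zpow_pos (-(m+1))
    set t := hy ((2:ℂ)^m * z).im ((2:ℝ)^m * z.re) with ht
    have h4 : |t| ≤ 4 := hy_abs_le _ _
    rw [abs_mul, abs_mul, _root_.abs_of_pos hb, abs_mul, _root_.abs_of_pos ha]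
    calc (2:ℝ)^(-(m+1)) * (|t| * ((2:ℝ)^m * |z.re|))
        ≤ (2:ℝ)^(-(m+1)) * (4 * ((2:ℝ)^m * |z.re|)) := by
          apply mul_le_mul_of_nonneg_left _ (le_of_lt hb)
          apply mul_le_mul_of_nonneg_right h4
          positivity
      _ = 2 * |z.re| := by
          have := zpow_cancel' m
          linear_combination (4 * |z.re|) * this

lemma f_norm_le (z : ℂ) : ‖f z‖ ≤ 3 * ‖z‖ := by
  calc ‖f z‖ ≤ |(f z).re| + |(f z).im| := Complex.norm_le_abs_re_add_abs_im _
    _ ≤ 2 * |z.re| + |z.im| / 2 := by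
        have h1 := f_re_bound z
        have : |(f z).im| = |z.im| / 2 := by rw [f_im, abs_div, _root_.abs_two]
        linarith
    _ ≤ 3 * ‖z‖ := by
        have := Complex.abs_re_le_norm z
        have := Complex.abs_im_le_norm z
        have := norm_nonneg z
        linarith

lemma f_flat {z : ℂ} (h0 : 0 < z.im) (hx : 2 * z.im ≤ |z.re|) : f z = Flin z := by
  obtain ⟨h1, h2⟩ := mval_spec h0
  rw [f_eq_of h1 h2]
  set m := mval z.im with hm
  have ha := two_zpow_pos m
  have hy1 : 1/2 < (2:ℝ)^m * z.im := by
    have := mul_lt_mul_of_pos_left h1 ha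
    rw [mul_comm ((2:ℝ)^m) ((2:ℝ)^(-(m+1))), zpow_cancel'] at this
    linarith
  have him : ((2:ℂ)^m * z).im = (2:ℝ)^m * z.im := zpow_mul_im m z
  have hxw : |((2:ℂ)^m * z).re| = (2:ℝ)^m * |z.re| := by
    rw [zpow_mul_re, abs_mul, _root_.abs_of_pos ha]
  have hx' : 2 * ((2:ℝ)^m * z.im) ≤ |((2:ℂ)^m * z).re| := by
    rw [hxw]
    nlinarith
  have hval : hy ((2:ℂ)^m * z).im ((2:ℂ)^m * z).re = 4 := by
    unfold hy
    rw [him]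
    rw [if_neg, if_pos]
    · linarith
    · push_neg
      have := abs_nonneg ((2:ℝ)^m * z.im - 3/4)
      linarith
  apply Complex.ext
  · rw [zpow_mul_re, hmap_re, hval, zpow_mul_re, Flin_re]
    have := zpow_cancel' m
    linear_combination (4 * z.re) * this
  · rw [zpow_mul_im, hmap_im, zpow_mul_im, ← mul_assoc, zpow_cancel', Flin_im]
    ring

lemma hmap_cont : Continuous hmap := by
  have he : hmap = fun z => ((hy z.im z.re * z.re : ℝ) : ℂ) + ((z.im : ℝ) : ℂ) * Complex.I := by
    funext z; rw [hmap, Complex.mk_eq_add_mul_I]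
  rw [he]
  apply Continuous.add
  · apply Complex.continuous_ofReal.comp
    exact (hy_cont.comp (Complex.continuous_im.prodMk Complex.continuous_re)).mul
      Complex.continuous_re
  · exact (Complex.continuous_ofReal.comp Complex.continuous_im).mul continuous_const

lemma hmap_double {w : ℂ} (h : w.im = 1) : hmap w = 2 * hmap (w/2) := by
  have hre : (w/2).re = w.re/2 := by simp
  have him : (w/2).im = w.im/2 := by simp
  apply Complex.ext
  · show hy w.im w.re * w.re = (2 * hmap (w/2)).re
    rw [show (2 * hmap (w/2)).re = 2 * (hmap (w/2)).re by simp, hmap_re, hre, him, h,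
      hy_double]
    ring
  · show w.im = (2 * hmap (w/2)).im
    rw [show (2 * hmap (w/2)).im = 2 * (hmap (w/2)).im by simp, hmap_im, him]
    ring

noncomputable def Fm (m : ℤ) (z : ℂ) : ℂ := (2:ℂ)^(-(m+1)) * hmap ((2:ℂ)^m * z)

lemma Fm_cont (m : ℤ) : Continuous (Fm m) :=
  continuous_const.mul (hmap_cont.comp (continuous_const.mul continuous_id))

lemma Fm_double {m : ℤ} {z : ℂ} (h : z.im = (2:ℝ)^(-m)) : Fm m z = Fm (m-1) z := by
  have hw : ((2:ℂ)^m * z).im = 1 := by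
    rw [zpow_mul_im, h, zpow_cancel2]
  have hhalf : (2:ℂ)^m * z / 2 = (2:ℂ)^(m-1) * z := by
    rw [zpow_sub₀ (two_ne_zero : (2:ℂ) ≠ 0), zpow_one]; ring
  unfold Fm
  rw [hmap_double hw, hhalf, ← mul_assoc]
  congr 1
  rw [show -(m-1+1) = -(m+1) + 1 by ring, zpow_add₀ (two_ne_zero : (2:ℂ) ≠ 0), zpow_one]

lemma two_zpow_lt (m : ℤ) : (2:ℝ)^(-(m+1)) < 2^(-m) :=
  zpow_lt_zpow_right₀ (by norm_num) (by omega)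

lemma f_cont : Continuous f := by
  rw [continuous_iff_continuousAt]
  intro z₀
  rcases lt_trichotomy z₀.im 0 with hneg | hzero | hpos
  · -- negative imaginary part
    have hev : ∀ᶠ z in nhds z₀, f z = Flin z := by
      filter_upwards [(isOpen_lt Complex.continuous_im continuous_const).eventually_mem
        (show z₀ ∈ {z : ℂ | z.im < 0} from hneg)] with z hz
      exact f_low (le_of_lt hz)
    exact (continuousAt_congr hev).mpr Flin_cont.continuousAt
  · -- zero imaginary part
    by_cases hre : z₀.re = 0
    · have hz0 : z₀ = 0 := Complex.ext hre hzero
      subst hz0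
      have hf0 : f 0 = 0 := by
        rw [f_low (le_of_eq Complex.zero_im), Flin]; simp
      unfold ContinuousAt
      rw [hf0]
      apply squeeze_zero_norm (a := fun z : ℂ => 3 * ‖z‖)
      · intro z
        exact f_norm_le z
      · have : Tendsto (fun z : ℂ => 3 * ‖z‖) (nhds 0) (nhds (3 * ‖(0:ℂ)‖)) :=
          (continuous_const.mul continuous_norm).tendsto 0
        simpa using this
    · have hop : IsOpen {z : ℂ | 2 * |z.im| < |z.re|} :=
        isOpen_lt (by fun_prop) (by fun_prop)
      have hmem : z₀ ∈ {z : ℂ | 2 * |z.im| < |z.re|} := by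
        simp only [mem_setOf_eq, hzero, abs_zero, mul_zero]
        exact abs_pos.mpr hre
      have hev : ∀ᶠ z in nhds z₀, f z = Flin z := by
        filter_upwards [hop.eventually_mem hmem] with z hz
        rcases le_or_gt z.im 0 with h | h
        · exact f_low h
        · exact f_flat h (by rw [_root_.abs_of_pos h] at hz; linarith)
      exact (continuousAt_congr hev).mpr Flin_cont.continuousAt
  · -- positive imaginary part
    obtain ⟨h1, h2⟩ := mval_spec hpos
    set m := mval z₀.im with hm
    rcases lt_or_eq_of_le h2 with hlt | heq
    · have hop : IsOpen {z : ℂ | (2:ℝ)^(-(m+1)) < z.im ∧ z.im < (2:ℝ)^(-m)} :=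
        (isOpen_lt continuous_const Complex.continuous_im).inter
          (isOpen_lt Complex.continuous_im continuous_const)
      have hev : ∀ᶠ z in nhds z₀, f z = Fm m z := by
        filter_upwards [hop.eventually_mem ⟨h1, hlt⟩] with z hz
        exact f_eq_of hz.1 (le_of_lt hz.2)
      exact (continuousAt_congr hev).mpr (Fm_cont m).continuousAt
    · -- boundary case z₀.im = 2^(-m)
      have hw1 : ContinuousWithinAt f {z : ℂ | z.im ≤ (2:ℝ)^(-m)} z₀ := by
        apply ((Fm_cont m).continuousAt.continuousWithinAt).congr_of_eventuallyEq
        · have h1' : ∀ᶠ z in nhds z₀, (2:ℝ)^(-(m+1)) < z.im :=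
            (isOpen_lt continuous_const Complex.continuous_im).eventually_mem h1
          filter_upwards [h1'.filter_mono nhdsWithin_le_nhds, self_mem_nhdsWithin] with z ha hb
          exact f_eq_of ha hb
        · exact f_eq_of h1 (le_of_eq heq)
      have hw2 : ContinuousWithinAt f {z : ℂ | (2:ℝ)^(-m) ≤ z.im} z₀ := by
        apply ((Fm_cont (m-1)).continuousAt.continuousWithinAt).congr_of_eventuallyEq
        · have hlt2 : z₀.im < (2:ℝ)^(-(m-1)) := by
            rw [heq]
            have := two_zpow_lt (m-1)
            rwa [show -(m-1+1) = -m by ring] at this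
          have h2' : ∀ᶠ z in nhds z₀, z.im < (2:ℝ)^(-(m-1)) :=
            (isOpen_lt Complex.continuous_im continuous_const).eventually_mem hlt2
          filter_upwards [h2'.filter_mono nhdsWithin_le_nhds, self_mem_nhdsWithin] with z ha hb
          rcases lt_or_eq_of_le (show (2:ℝ)^(-m) ≤ z.im from hb) with hgt | heq2
          · apply f_eq_of _ (le_of_lt ha)
            rwa [show -(m-1+1) = -m by ring]
          · have hz2 : z.im = (2:ℝ)^(-m) := heq2.symm
            rw [f_eq_of (m := m) (by rw [hz2]; exact two_zpow_lt m) (le_of_eq hz2)]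
            exact Fm_double hz2
        · rw [show f z₀ = Fm m z₀ from f_eq_of h1 (le_of_eq heq), Fm_double heq]
      have := hw1.union hw2
      rw [show {z : ℂ | z.im ≤ (2:ℝ)^(-m)} ∪ {z : ℂ | (2:ℝ)^(-m) ≤ z.im} = univ from
        eq_univ_of_forall fun z => (le_total z.im ((2:ℝ)^(-m))).elim Or.inl Or.inr,
        continuousWithinAt_univ] at this
      exact this

lemma ftilde_cont (δ : ℝ) : Continuous (ftilde δ) := by
  unfold ftilde
  apply Continuous.if_le f_cont _ continuous_const Complex.continuous_im
  · intro z h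
    have hzim : z.im = 0 := h.symm
    rw [f_low (le_of_eq hzim), if_pos (by rw [hzim]; norm_num : (-1:ℝ) ≤ z.im)]
    have hF : Flin z = 2 * z := by
      apply Complex.ext
      · rw [Flin_re]; simp
      · rw [Flin_im]; simp [hzim]
    rw [hF, hzim]
    push_cast
    ring
  · apply Continuous.if_le _ _ continuous_const Complex.continuous_im
    · intro z h
      rw [← h]
      push_cast
      ring
    · fun_prop
    · fun_prop

lemma ftilde_val {δ r : ℝ} (hr : 1 < r) :
    ftilde δ (-(r:ℂ) * Complex.I) = Complex.I * (-2*r) + ((δ * Real.exp (r^2) : ℝ) : ℂ) := by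
  have him : ((-(r:ℂ)) * Complex.I).im = -r := by simp
  unfold ftilde
  rw [if_neg (by rw [him]; linarith), if_neg (by rw [him]; linarith)]
  have hsq : -(-(r:ℂ) * Complex.I)^2 = ((r^2 : ℝ) : ℂ) := by
    push_cast
    rw [mul_pow, Complex.I_sq]
    ring
  rw [hsq, ← Complex.ofReal_exp]
  push_cast
  ring

lemma ftilde_ratio {δ r : ℝ} (hr : 1 < r) :
    ‖ftilde δ (-(r:ℂ) * Complex.I)‖ / Real.exp (r^2)
      = ‖(δ:ℂ) + Complex.I * ((-2*r*Real.exp (-r^2) : ℝ) : ℂ)‖ := by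
  have hE : (0:ℝ) < Real.exp (r^2) := Real.exp_pos _
  rw [ftilde_val hr]
  rw [show ((δ:ℂ) + Complex.I * ((-2*r*Real.exp (-r^2) : ℝ) : ℂ)) =
      (Complex.I * (-2*r) + ((δ * Real.exp (r^2) : ℝ) : ℂ)) / ((Real.exp (r^2) : ℝ) : ℂ) by
    rw [eq_div_iff (by exact_mod_cast hE.ne')]
    push_cast [Real.exp_neg]
    field_simp
    ring]
  rw [norm_div, Complex.norm_of_nonneg hE.le]

lemma ftilde_tendsto (δ : ℝ) (hδ : 0 < δ) :
    Tendsto (fun r : ℝ => ‖ftilde δ (-(r : ℂ) * Complex.I)‖ / Real.exp (r ^ 2))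
      atTop (nhds δ) := by
  have h0 : Tendsto (fun r : ℝ => -2*r*Real.exp (-r^2)) atTop (nhds 0) := by
    have hsq : Tendsto (fun r : ℝ => r^2) atTop atTop := tendsto_pow_atTop (by norm_num)
    have hbase : Tendsto (fun r : ℝ => r^2 * Real.exp (-r^2)) atTop (nhds 0) :=
      (Real.tendsto_pow_mul_exp_neg_atTop_nhds_zero 1).comp hsq |>.congr
        (fun r => by simp)
    have hr1 : Tendsto (fun r : ℝ => r * Real.exp (-r^2)) atTop (nhds 0) := by
      apply squeeze_zero' (Filter.eventually_atTop.mpr ⟨0, fun r hr => by positivity⟩)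
        (Filter.eventually_atTop.mpr ⟨1, fun r hr => ?_⟩) hbase
      have : r ≤ r^2 := by nlinarith
      have he : (0:ℝ) < Real.exp (-r^2) := Real.exp_pos _
      nlinarith
    have := hr1.const_mul (-2)
    simpa [mul_assoc] using this
  have hcplx : Tendsto (fun r : ℝ => (δ:ℂ) + Complex.I * ((-2*r*Real.exp (-r^2) : ℝ) : ℂ))
      atTop (nhds ((δ:ℂ) + Complex.I * ((0:ℝ):ℂ))) :=
    tendsto_const_nhds.add (tendsto_const_nhds.mul ((Complex.continuous_ofReal.tendsto 0).comp h0))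
  have habs : Tendsto (fun r : ℝ => ‖(δ:ℂ) + Complex.I * ((-2*r*Real.exp (-r^2) : ℝ) : ℂ)‖)
      atTop (nhds δ) := by
    have := (continuous_norm.tendsto _).comp hcplx
    simpa [_root_.abs_of_pos hδ, Function.comp_def] using this
  apply habs.congr'
  filter_upwards [Filter.eventually_gt_atTop 1] with r hr
  exact (ftilde_ratio hr).symm

lemma ftilde_poly (δ : ℝ) (hδ : 0 < δ) (n : ℕ) :
    Tendsto (fun r : ℝ => ‖ftilde δ (-(r : ℂ) * Complex.I)‖ / r ^ n)
      atTop atTop := by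
  have hexp : Tendsto (fun r : ℝ => Real.exp (r^2) / r^n) atTop atTop := by
    apply tendsto_atTop_mono' atTop _ (Real.tendsto_exp_div_pow_atTop n)
    filter_upwards [Filter.eventually_ge_atTop 1] with r hr
    apply div_le_div_of_nonneg_right _ (by positivity)
    · exact Real.exp_le_exp.mpr (by nlinarith)
  have := (ftilde_tendsto δ hδ).pos_mul_atTop hδ hexp
  apply this.congr'
  filter_upwards [Filter.eventually_gt_atTop 1] with r hr
  have hE : Real.exp (r^2) ≠ 0 := (Real.exp_pos _).ne'
  field_simp

theorem stmt19 (δ : ℝ) (hδ : 0 < δ) :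
    Continuous (ftilde δ) ∧
    Tendsto (fun r : ℝ => ‖ftilde δ (-(r : ℂ) * Complex.I)‖ / Real.exp (r ^ 2))
      atTop (nhds δ) ∧
    ∀ n : ℕ, Tendsto
      (fun r : ℝ => ‖ftilde δ (-(r : ℂ) * Complex.I)‖ / r ^ n)
      atTop atTop :=
  ⟨ftilde_cont δ, ftilde_tendsto δ hδ, ftilde_poly δ hδ⟩
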